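/- For all positive integers m, n and every BQAP2 instance (q, c, d): min over a : Fin m, b : Fin n of f2(σ^a, τ^b) ≤ A2(q,c,d) ≤ max over a : Fin m, b : Fin n of f2(σ^a, τ^b), where (σ^a, τ^b) is the constant feasible solution with σ^a(i) = a for all i and τ^b(l) = b for all l. -/

import Mathlib

/-- Objective function of BQAP2. -/
noncomputable def f2 {m n : ℕ} (q : Fin m → Fin m → Fin n → Fin n → ℝ)
    (c : Fin m → Fin m → ℝ) (d : Fin n → Fin n → ℝ)
    (σ : Fin m → Fin m) (τ : Fin n → Fin n) : ℝ :=
  (∑ i, ∑ l, q i (σ i) (τ l) l) + (∑ i, c i (σ i)) + (∑ l, d (τ l) l)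

/-- Average objective value of BQAP2. -/
noncomputable def A2 {m n : ℕ} (q : Fin m → Fin m → Fin n → Fin n → ℝ)
    (c : Fin m → Fin m → ℝ) (d : Fin n → Fin n → ℝ) : ℝ :=
  (1 / ((m : ℝ) * n)) * (∑ i, ∑ j, ∑ k, ∑ l, q i j k l)
    + (1 / (m : ℝ)) * (∑ i, ∑ j, c i j)
    + (1 / (n : ℝ)) * (∑ i, ∑ j, d i j)

lemma A2_eq_avg {m n : ℕ} (hm : 0 < m) (hn : 0 < n)
    (q : Fin m → Fin m → Fin n → Fin n → ℝ)
    (c : Fin m → Fin m → ℝ) (d : Fin n → Fin n → ℝ) :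
    A2 q c d = (1 / ((m : ℝ) * n)) *
      ∑ ab : Fin m × Fin n, f2 q c d (fun _ => ab.1) (fun _ => ab.2) := by
  have hm' : (m : ℝ) ≠ 0 := Nat.cast_ne_zero.mpr hm.ne'
  have hn' : (n : ℝ) ≠ 0 := Nat.cast_ne_zero.mpr hn.ne'
  rw [Fintype.sum_prod_type]
  simp only [f2, Finset.sum_add_distrib]
  have h1 : ∑ a : Fin m, ∑ b : Fin n, (∑ i, ∑ l, q i a b l)
      = ∑ i, ∑ j, ∑ k, ∑ l, q i j k l :=
    calc ∑ a : Fin m, ∑ b : Fin n, ∑ i, ∑ l, q i a b l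
        = ∑ a : Fin m, ∑ i, ∑ b : Fin n, ∑ l, q i a b l :=
          Finset.sum_congr rfl fun a _ => Finset.sum_comm
      _ = ∑ i, ∑ a : Fin m, ∑ b : Fin n, ∑ l, q i a b l := Finset.sum_comm
  have h2 : ∑ a : Fin m, ∑ _b : Fin n, (∑ i, c i a)
      = (n : ℝ) * ∑ i, ∑ j, c i j := by
    simp only [Finset.sum_const, Finset.card_univ, Fintype.card_fin, nsmul_eq_mul]
    rw [← Finset.mul_sum, Finset.sum_comm]
  have h3 : ∑ _a : Fin m, ∑ b : Fin n, (∑ l, d b l)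
      = (m : ℝ) * ∑ i, ∑ j, d i j := by
    simp [Finset.sum_const]
  rw [h1, h2, h3, A2]
  field_simp

theorem min_max_constant_solutions_BQAP2 (m n : ℕ) (hm : 0 < m) (hn : 0 < n)
    (q : Fin m → Fin m → Fin n → Fin n → ℝ)
    (c : Fin m → Fin m → ℝ) (d : Fin n → Fin n → ℝ) :
    Finset.univ.inf' ⟨((⟨0, hm⟩ : Fin m), (⟨0, hn⟩ : Fin n)), Finset.mem_univ _⟩
        (fun ab : Fin m × Fin n => f2 q c d (fun _ => ab.1) (fun _ => ab.2))
      ≤ A2 q c d ∧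
    A2 q c d ≤
      Finset.univ.sup' ⟨((⟨0, hm⟩ : Fin m), (⟨0, hn⟩ : Fin n)), Finset.mem_univ _⟩
        (fun ab : Fin m × Fin n => f2 q c d (fun _ => ab.1) (fun _ => ab.2)) := by
  set g := fun ab : Fin m × Fin n => f2 q c d (fun _ => ab.1) (fun _ => ab.2) with hg
  have H : (Finset.univ : Finset (Fin m × Fin n)).Nonempty :=
    ⟨((⟨0, hm⟩ : Fin m), (⟨0, hn⟩ : Fin n)), Finset.mem_univ _⟩
  have hN : (0:ℝ) < (m:ℝ) * n := by positivity
  have hcard : ((Finset.univ : Finset (Fin m × Fin n)).card : ℝ) = (m:ℝ) * n := by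
    simp
  have havg : A2 q c d = (∑ ab, g ab) / ((m:ℝ) * n) := by
    rw [A2_eq_avg hm hn]; ring
  constructor
  · rw [havg, le_div_iff₀ hN]
    calc Finset.univ.inf' H g * ((m:ℝ) * n)
        = ∑ _ab : Fin m × Fin n, Finset.univ.inf' H g := by
          rw [Finset.sum_const, nsmul_eq_mul, hcard]; ring
      _ ≤ ∑ ab, g ab :=
          Finset.sum_le_sum fun x _ => Finset.inf'_le g (Finset.mem_univ x)
  · rw [havg, div_le_iff₀ hN]
    calc ∑ ab, g ab
        ≤ ∑ _ab : Fin m × Fin n, Finset.univ.sup' H g :=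
          Finset.sum_le_sum fun x _ => Finset.le_sup' g (Finset.mem_univ x)
      _ = Finset.univ.sup' H g * ((m:ℝ) * n) := by
          rw [Finset.sum_const, nsmul_eq_mul, hcard]; ring
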